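/- There exists a finite sequential game with acyclic preferences possessing a terminal profile of the {I,A}-dynamics that is not a Nash Equilibrium. -/

import Mathlib

namespace SeqGame

inductive GameTree (N O : Type) : Type where
  | leaf (o : O) : GameTree N O
  | node (i : N) (children : List (GameTree N O)) : GameTree N O

namespace GameTree

variable {N O : Type}

/-- The subtree of `T` at position `p` (a list of child indices), if it exists. -/
def subtree : GameTree N O → List ℕ → Option (GameTree N O)
  | t, [] => some t
  | leaf _, _ :: _ => none
  | node _ c, k :: p =>
    match getElem? c k with
    | some t => subtree t p
    | none => none

/-- A strategy profile: a choice of a child index at every position. -/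
abbrev Profile := List ℕ → ℕ

/-- A profile is legal if it chooses an existing child at every internal node. -/
def Legal (T : GameTree N O) (s : Profile) : Prop :=
  ∀ p i c, T.subtree p = some (node i c) → s p < c.length

/-- The profiles `s` and `s'` differ at the (valid, internal) node `p`. -/
def Differs (T : GameTree N O) (s s' : Profile) (p : List ℕ) : Prop :=
  (∃ i c, T.subtree p = some (node i c)) ∧ s p ≠ s' p

/-- The outcome reached when playing according to the profile `s`. -/
def outcome : GameTree N O → Profile → Option O
  | leaf o, _ => some o
  | node _ c, s =>
    match h : getElem? c (s []) with
    | some t => outcome t (fun p => s (s [] :: p))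
    | none => none
decreasing_by
  have hm : t ∈ c := by
    exact List.mem_of_getElem? h
  have := List.sizeOf_lt_of_mem hm
  simp only [node.sizeOf_spec]
  omega

/-- The profile `s` re-rooted at position `p`. -/
def shift (s : Profile) (p : List ℕ) : Profile := fun q => s (p ++ q)

/-- The owner of the node at position `p`, if it is internal. -/
def ownerAt (T : GameTree N O) (p : List ℕ) : Option N :=
  match T.subtree p with
  | some (node i _) => some i
  | _ => none

/-- `p` lies along the play induced by `s`. -/
def OnPlay (s : Profile) (p : List ℕ) : Prop :=
  ∀ q k, (q ++ [k]) <+: p → s q = k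

/-- Improvement property: every player who changes strictly improves the outcome. -/
def Iprop (T : GameTree N O) (pref : N → O → O → Prop) (s s' : Profile) : Prop :=
  ∀ p i c, T.subtree p = some (node i c) → s p ≠ s' p →
    ∃ x y, T.outcome s = some x ∧ T.outcome s' = some y ∧ pref i x y

/-- Subgame improvement property. -/
def SIprop (T : GameTree N O) (pref : N → O → O → Prop) (s s' : Profile) : Prop :=
  ∀ p i c, T.subtree p = some (node i c) → s p ≠ s' p →
    ∃ x y, outcome (node i c) (shift s p) = some x ∧
      outcome (node i c) (shift s' p) = some y ∧ pref i x y

/-- Laziness property: all changed nodes lie along the play induced by `s'`. -/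
def Lprop (T : GameTree N O) (s s' : Profile) : Prop :=
  ∀ p, Differs T s s' p → OnPlay s' p

/-- One player property: at most one player changes his strategy. -/
def P1prop (T : GameTree N O) (s s' : Profile) : Prop :=
  ∃ i : N, ∀ p, Differs T s s' p → T.ownerAt p = some i

/-- Atomicity property: at most one node changes. -/
def Aprop (T : GameTree N O) (s s' : Profile) : Prop :=
  ∀ p q, Differs T s s' p → Differs T s s' q → p = q

/-- Names of the update properties. -/
inductive Upd : Type | I | SI | L | P1 | A
deriving DecidableEq

/-- Interpretation of an update property name. -/
def holds (T : GameTree N O) (pref : N → O → O → Prop) : Upd → Profile → Profile → Prop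
  | .I => Iprop T pref
  | .SI => SIprop T pref
  | .L => Lprop T
  | .P1 => P1prop T
  | .A => Aprop T

/-- The X-dynamics: an actual update (between legal profiles) satisfying
all properties in `X`. -/
def XDyn (X : Set Upd) (T : GameTree N O) (pref : N → O → O → Prop)
    (s s' : Profile) : Prop :=
  Legal T s ∧ Legal T s' ∧ (∃ p, Differs T s s' p) ∧ ∀ u ∈ X, holds T pref u s s'

/-- A dynamics terminates iff there is no infinite update sequence. -/
def Terminates (D : Profile → Profile → Prop) : Prop :=
  ¬ ∃ f : ℕ → Profile, ∀ n, D (f n) (f (n + 1))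

/-- `s'` is a deviation from `s` by the coalition `I`. -/
def Deviation (T : GameTree N O) (I : Set N) (s s' : Profile) : Prop :=
  Legal T s' ∧ ∀ p i c, T.subtree p = some (node i c) → i ∉ I → s p = s' p

/-- Nash equilibrium. -/
def IsNE (T : GameTree N O) (pref : N → O → O → Prop) (s : Profile) : Prop :=
  ∀ i s', Deviation T {i} s s' →
    ∀ x y, T.outcome s = some x → T.outcome s' = some y → ¬ pref i x y

/-- Subgame perfect equilibrium: an NE in every subgame. -/
def IsSPE (T : GameTree N O) (pref : N → O → O → Prop) (s : Profile) : Prop :=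
  ∀ p t, T.subtree p = some t → IsNE t pref (shift s p)

/-- Strong Nash equilibrium (Aumann). -/
def IsSNE (T : GameTree N O) (pref : N → O → O → Prop) (s : Profile) : Prop :=
  ∀ I : Set N, I.Nonempty → ∀ s', Deviation T I s s' →
    ∃ i ∈ I, ∀ x y, T.outcome s = some x → T.outcome s' = some y → ¬ pref i x y

/-- A relation is acyclic if it has no cycle. -/
def Acyclic (r : O → O → Prop) : Prop := ∀ x, ¬ Relation.TransGen r x x

/-- Incomparability. -/
def Incomp (r : O → O → Prop) (x y : O) : Prop := ¬ r x y ∧ ¬ r y x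

/-- Strict weak order: irreflexive, transitive, with transitive incomparability. -/
def IsSWO (r : O → O → Prop) : Prop :=
  (∀ x, ¬ r x x) ∧ (∀ x y z, r x y → r y z → r x z) ∧
    (∀ x y z, Incomp r x y → Incomp r y z → Incomp r x z)

/-- Strict linear order: irreflexive, transitive and total. -/
def IsSLO (r : O → O → Prop) : Prop :=
  (∀ x, ¬ r x x) ∧ (∀ x y z, r x y → r y z → r x z) ∧
    (∀ x y, x ≠ y → r x y ∨ r y x)

/-- Absence of the main pattern. -/
def OutOfMainPattern (pref : N → O → O → Prop) : Prop :=
  ∀ (i j : N) (x y z : O),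
    ¬ (pref i x y ∧ pref i y z ∧ pref j y z ∧ pref j z x)

/-- Absence of the secondary pattern. -/
def OutOfSecondaryPattern (pref : N → O → O → Prop) : Prop :=
  ∀ (i j : N) (w x y z : O),
    ¬ (pref i w x ∧ pref i x y ∧ pref i y z ∧
       Incomp (pref j) x z ∧ pref j z w ∧ Incomp (pref j) w y)

/-- Absence of both patterns. -/
def OutOfPattern (pref : N → O → O → Prop) : Prop :=
  OutOfMainPattern pref ∧ OutOfSecondaryPattern pref

/-- The preferences can be layered: there is an ordered partition of the
outcomes (given by a layer-index function) such that higher layers are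
unanimously weakly preferred, and within a layer no two players agree on
one pair while disagreeing on another pair. -/
def CanBeLayered (pref : N → O → O → Prop) : Prop :=
  ∃ ℓ : O → ℕ,
    (∀ x y, ℓ x < ℓ y → ∀ i, ¬ pref i y x) ∧
    (∀ (i j : N) (w x y z : O), ℓ w = ℓ x → ℓ x = ℓ y → ℓ y = ℓ z →
      ¬ (pref i x y ∧ pref j x y ∧ pref i w z ∧ pref j z w))

end GameTree
end SeqGame

open SeqGame GameTree

private abbrev exT : GameTree Unit ℕ := .node () [.leaf 1, .node () [.leaf 0, .leaf 2]]

private lemma aux_len (p : List ℕ) (i : Unit) (c : List (GameTree Unit ℕ))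
    (h : exT.subtree p = some (.node i c)) : c.length = 2 := by
  match p with
  | [] => simp [subtree, exT] at h; obtain ⟨rfl, rfl⟩ := h; rfl
  | 0 :: p' =>
    match p' with
    | [] => simp [subtree, exT] at h
    | _ :: _ => simp [subtree, exT] at h
  | 1 :: p' =>
    match p' with
    | [] => simp [subtree, exT] at h; obtain ⟨rfl, rfl⟩ := h; rfl
    | 0 :: p'' => match p'' with
      | [] => simp [subtree, exT] at h
      | _ :: _ => simp [subtree, exT] at h
    | 1 :: p'' => match p'' with
      | [] => simp [subtree, exT] at h
      | _ :: _ => simp [subtree, exT] at h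
    | (n+2) :: p'' => simp [subtree, exT] at h
  | (n+2) :: p' => simp [subtree, exT] at h

private lemma aux_pos (p : List ℕ) (i : Unit) (c : List (GameTree Unit ℕ))
    (h : exT.subtree p = some (.node i c)) : p = [] ∨ p = [1] := by
  match p with
  | [] => left; rfl
  | 0 :: p' =>
    match p' with
    | [] => simp [subtree, exT] at h
    | _ :: _ => simp [subtree, exT] at h
  | 1 :: p' =>
    match p' with
    | [] => right; rfl
    | 0 :: p'' => match p'' with
      | [] => simp [subtree, exT] at h
      | _ :: _ => simp [subtree, exT] at h
    | 1 :: p'' => match p'' with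
      | [] => simp [subtree, exT] at h
      | _ :: _ => simp [subtree, exT] at h
    | (n+2) :: p'' => simp [subtree, exT] at h
  | (n+2) :: p' => simp [subtree, exT] at h

private lemma aux_out_left (s : Profile) (h0 : s [] = 0) :
    exT.outcome s = some 1 := by
  simp only [exT, outcome]
  rw [h0]
  split
  · rename_i heq; simp at heq; subst heq; rw [outcome]
  · simp_all

private lemma aux_out10 (s : Profile) (h0 : s [] = 1) (h1 : s [1] = 0) :
    exT.outcome s = some 0 := by
  simp only [exT, outcome]
  rw [h0]
  simp only [List.getElem?_cons_succ, List.getElem?_cons_zero]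
  simp only [outcome]
  rw [h1]
  split
  · rename_i heq; simp at heq; subst heq; rw [outcome]
  · simp_all

private lemma aux_out11 (s : Profile) (h0 : s [] = 1) (h1 : s [1] = 1) :
    exT.outcome s = some 2 := by
  simp only [exT, outcome]
  rw [h0]
  simp only [List.getElem?_cons_succ, List.getElem?_cons_zero]
  simp only [outcome]
  rw [h1]
  split
  · rename_i heq; simp at heq; subst heq; rw [outcome]
  · simp_all

open SeqGame GameTree in
/-- There is a finite sequential game with acyclic preferences having a terminal
profile of the {I,A}-dynamics which is not a Nash equilibrium. -/
theorem stmt_9 :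
    ∃ (N O : Type) (T : GameTree N O) (pref : N → O → O → Prop) (s : Profile),
      (∀ i, Acyclic (pref i)) ∧ Legal T s ∧
      (∀ s', ¬ XDyn {Upd.I, Upd.A} T pref s s') ∧ ¬ IsNE T pref s := by
  classical
  refine ⟨Unit, ℕ, exT, fun _ a b => a < b, fun _ => 0, ?_, ?_, ?_, ?_⟩
  · intro _ x hx
    have key : ∀ a b : ℕ, Relation.TransGen (fun a b : ℕ => a < b) a b → a < b := by
      intro a b h
      induction h with
      | single h => exact h
      | tail _ h ih => exact lt_trans ih h
    exact lt_irrefl x (key x x hx)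
  · intro p i c h
    have := aux_len p i c h
    simp only [this]
    omega
  · rintro s' ⟨hL, hL', ⟨p, hp⟩, hU⟩
    have hI : Iprop _ _ (fun _ => 0) s' := hU .I (by simp)
    have hA : Aprop _ (fun _ => 0) s' := hU .A (by simp)
    obtain ⟨⟨i, c, hsub⟩, hne⟩ := hp
    rcases aux_pos p i c hsub with rfl | rfl
    · -- root changed: s' [] = 1
      have hlt := hL' [] i c hsub
      have hlen := aux_len [] i c hsub
      have hroot : s' [] = 1 := by
        simp only [hlen] at hlt
        simp only [ne_eq] at hne
        omega
      have hinner : s' [1] = 0 := by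
        by_contra hne1
        have hd1 : Differs exT (fun _ => 0) s' [1] :=
          ⟨⟨(), [.leaf 0, .leaf 2], by simp [subtree, exT]⟩, fun h => hne1 h.symm⟩
        have := hA [1] [] hd1 ⟨⟨i, c, hsub⟩, hne⟩
        simp at this
      obtain ⟨x, y, hx, hy, hxy⟩ := hI [] i c hsub hne
      rw [aux_out_left _ rfl] at hx
      rw [aux_out10 s' hroot hinner] at hy
      obtain rfl := Option.some_inj.mp hx
      obtain rfl := Option.some_inj.mp hy
      omega
    · -- inner changed: root unchanged, outcome stays 1
      have hroot : s' [] = 0 := by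
        by_contra hne0
        have hd0 : Differs exT (fun _ => 0) s' [] :=
          ⟨⟨(), [.leaf 1, .node () [.leaf 0, .leaf 2]], by simp [subtree, exT]⟩,
            fun h => hne0 h.symm⟩
        have := hA [] [1] hd0 ⟨⟨i, c, hsub⟩, hne⟩
        simp at this
      obtain ⟨x, y, hx, hy, hxy⟩ := hI [1] i c hsub hne
      rw [aux_out_left _ rfl] at hx
      rw [aux_out_left s' hroot] at hy
      obtain rfl := Option.some_inj.mp hx
      obtain rfl := Option.some_inj.mp hy
      omega
  · intro hNE
    have := hNE () (fun _ => 1) ?_ 1 2 ?_ ?_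
    · omega
    · constructor
      · intro p i c h
        have := aux_len p i c h
        simp only [this]
        omega
      · intro p i c _ hni
        exact absurd rfl hni
    · exact aux_out_left _ rfl
    · exact aux_out11 _ rfl rfl
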